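/- Let K(s,t) := min(s,t) − st for s, t ∈ (0,1) (the Brownian bridge kernel). For every injective sequence (x_j)_{j∈ℕ} in (0,1) and every complex sequence (c_j) with ∑_j |c_j| < ∞, if ∑_{j=1}^∞ c_j (min(x_j, t) − x_j t) = 0 for all t ∈ (0,1), then c_j = 0 for all j; that is, K satisfies condition (A3). -/

import Mathlib

open Finset

private lemma minlip (s a b : ℝ) : |min s a - min s b| ≤ |a - b| := by
  rcases le_total s a with h1 | h1 <;> rcases le_total s b with h2 | h2
  · rw [min_eq_left h1, min_eq_left h2]; simp
  · rw [min_eq_left h1, min_eq_right h2, abs_le]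
    constructor <;> linarith [le_abs_self (a - b), neg_abs_le (a - b), abs_nonneg (a - b)]
  · rw [min_eq_right h1, min_eq_left h2, abs_le]
    constructor <;> linarith [le_abs_self (a - b), neg_abs_le (a - b), abs_nonneg (a - b)]
  · rw [min_eq_right h1, min_eq_right h2]

theorem stmt_15 (x : ℕ → ℝ) (hx : ∀ j, x j ∈ Set.Ioo (0 : ℝ) 1)
    (hinj : Function.Injective x) (c : ℕ → ℂ)
    (hc : Summable fun j => ‖c j‖)
    (hzero : ∀ t ∈ Set.Ioo (0 : ℝ) 1,
      ∑' j, c j * ((min (x j) t - x j * t : ℝ) : ℂ) = 0) :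
    ∀ j, c j = 0 := by
  have hcn : Summable fun k => ‖c k‖ := by simpa using hc
  have habs : ∀ t ∈ Set.Ioo (0:ℝ) 1,
      Summable (fun k => c k * ((min (x k) t - x k * t : ℝ) : ℂ)) := by
    intro t ht
    apply Summable.of_norm
    refine Summable.of_nonneg_of_le (fun k => norm_nonneg _) (fun k => ?_) (hcn.mul_right 2)
    have hk := hx k
    have h1 : 0 ≤ min (x k) t := le_min hk.1.le ht.1.le
    have h2 : min (x k) t ≤ 1 := min_le_of_left_le hk.2.le
    have h3 : 0 ≤ x k * t := mul_nonneg hk.1.le ht.1.le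
    have h4 : x k * t ≤ 1 := by nlinarith [hk.1.le, hk.2.le, ht.1.le, ht.2.le, mul_le_one₀ hk.2.le ht.1.le ht.2.le]
    rw [norm_mul, Complex.norm_real, Real.norm_eq_abs]
    have hb : |min (x k) t - x k * t| ≤ 2 := abs_le.mpr ⟨by linarith, by linarith⟩
    exact mul_le_mul_of_nonneg_left hb (norm_nonneg _)
  intro j
  suffices key : ∀ ε > 0, ‖c j‖ ≤ 4 * ε by
    have h0 : ‖c j‖ ≤ 0 := by
      refine le_of_forall_pos_le_add fun ε hε => ?_
      have := key (ε/4) (by linarith)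
      linarith
    exact norm_eq_zero.mp (le_antisymm h0 (norm_nonneg _))
  intro ε hε
  obtain ⟨F, hF⟩ := hc.vanishing (Iio_mem_nhds hε)
  have hs := hx j
  set D : Finset ℝ := insert (min (x j) (1 - x j)) ((F.erase j).image fun k => |x k - x j|)
    with hD
  have hDne : D.Nonempty := insert_nonempty _ _
  set h : ℝ := D.min' hDne / 2 with hh
  have hDpos : ∀ r ∈ D, 0 < r := by
    intro r hr
    rw [hD, Finset.mem_insert] at hr
    rcases hr with rfl | hr
    · exact lt_min hs.1 (by linarith [hs.2])
    · obtain ⟨k, hk, rfl⟩ := Finset.mem_image.mp hr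
      have hne : x k ≠ x j := fun hxx => (Finset.mem_erase.mp hk).1 (hinj hxx)
      exact abs_pos.mpr (sub_ne_zero.mpr hne)
  have hminpos : 0 < D.min' hDne := hDpos _ (D.min'_mem hDne)
  have hhpos : 0 < h := by rw [hh]; linarith
  have hhlt : h < min (x j) (1 - x j) := by
    have := D.min'_le _ (by rw [hD]; exact Finset.mem_insert_self _ _)
    rw [hh]; linarith
  have hA : h < x j := lt_of_lt_of_le hhlt (min_le_left _ _)
  have hB : h < 1 - x j := lt_of_lt_of_le hhlt (min_le_right _ _)
  have hst1 : x j + h ∈ Set.Ioo (0:ℝ) 1 := ⟨by linarith [hs.1], by linarith⟩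
  have hst2 : x j - h ∈ Set.Ioo (0:ℝ) 1 := ⟨by linarith, by linarith [hs.2]⟩
  have hfarF : ∀ k ∈ F, k ≠ j → h < |x k - x j| := by
    intro k hk hkj
    have hmem : |x k - x j| ∈ D := by
      rw [hD]
      exact Finset.mem_insert_of_mem (Finset.mem_image_of_mem _ (Finset.mem_erase.mpr ⟨hkj, hk⟩))
    have := D.min'_le _ hmem
    rw [hh]; linarith
  set g : ℕ → ℝ := fun k =>
    (min (x k) (x j + h) - x k * (x j + h)) + (min (x k) (x j - h) - x k * (x j - h))
      - 2 * (min (x k) (x j) - x k * (x j)) with hg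
  have hsum1 := habs _ hst1
  have hsum2 := habs _ hst2
  have hsum3 := habs _ hs
  have heq : (fun k => c k * ((g k : ℝ) : ℂ)) =
      fun k => (c k * ((min (x k) (x j + h) - x k * (x j + h) : ℝ) : ℂ)
        + c k * ((min (x k) (x j - h) - x k * (x j - h) : ℝ) : ℂ))
        - 2 * (c k * ((min (x k) (x j) - x k * (x j) : ℝ) : ℂ)) := by
    funext k
    simp only [hg]
    push_cast
    ring
  have hGsum : Summable (fun k => c k * ((g k : ℝ) : ℂ)) := by
    rw [heq]; exact (hsum1.add hsum2).sub (hsum3.mul_left 2)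
  have hzero' : ∑' k, c k * ((g k : ℝ) : ℂ) = 0 := by
    rw [heq, Summable.tsum_sub (hsum1.add hsum2) (hsum3.mul_left 2), Summable.tsum_add hsum1 hsum2,
      tsum_mul_left, hzero _ hst1, hzero _ hst2, hzero _ hs]
    ring
  have hsplit := Summable.tsum_eq_add_tsum_ite hGsum j
  rw [hzero'] at hsplit
  have hgj : g j = -h := by
    simp only [hg]
    rw [min_eq_left (by linarith : x j ≤ x j + h),
        min_eq_right (by linarith : x j - h ≤ x j), min_self]
    ring
  have hfar : ∀ k, h ≤ |x k - x j| → g k = 0 := by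
    intro k hk
    simp only [hg]
    rcases le_total (x k) (x j) with hle | hle
    · have h1 : x k ≤ x j - h := by
        rw [abs_of_nonpos (by linarith)] at hk; linarith
      rw [min_eq_left (by linarith), min_eq_left h1, min_eq_left hle]
      ring
    · have h1 : x j + h ≤ x k := by
        rw [abs_of_nonneg (by linarith)] at hk; linarith
      rw [min_eq_right h1, min_eq_right (by linarith), min_eq_right hle]
      ring
  have hbound : ∀ k, |g k| ≤ 2 * h := by
    intro k
    have hrepr : g k = (min (x k) (x j + h) - min (x k) (x j))
        + (min (x k) (x j - h) - min (x k) (x j)) := by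
      simp only [hg]; ring
    rw [hrepr]
    calc |(min (x k) (x j + h) - min (x k) (x j))
          + (min (x k) (x j - h) - min (x k) (x j))|
        ≤ |min (x k) (x j + h) - min (x k) (x j)|
          + |min (x k) (x j - h) - min (x k) (x j)| := abs_add_le _ _
      _ ≤ |x j + h - x j| + |x j - h - x j| := add_le_add (minlip _ _ _) (minlip _ _ _)
      _ = 2 * h := by
          rw [show x j + h - x j = h by ring, show x j - h - x j = -h by ring,
            abs_neg, abs_of_pos hhpos]; ring
  set w : ℕ → ℝ := fun k => if k ≠ j ∧ |x k - x j| < h then ‖c k‖ else 0 with hw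
  have hwnn : ∀ k, 0 ≤ w k := by
    intro k; simp only [hw]
    split
    · exact norm_nonneg _
    · exact le_refl 0
  have hwle : ∀ k, w k ≤ ‖c k‖ := by
    intro k; simp only [hw]
    split
    · exact le_refl _
    · exact norm_nonneg _
  have hwsum : Summable w := Summable.of_nonneg_of_le hwnn hwle hc
  have htermle : ∀ k, ‖(if k = j then 0 else c k * ((g k : ℝ):ℂ))‖ ≤ 2 * h * w k := by
    intro k
    by_cases hkj : k = j
    · subst hkj
      have hwj : w k = 0 := by simp [hw]
      simp [hwj]
    · rw [if_neg hkj]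
      by_cases hnear : |x k - x j| < h
      · rw [norm_mul, Complex.norm_real, Real.norm_eq_abs]
        have hwk : w k = ‖c k‖ := by simp [hw, hkj, hnear]
        rw [hwk]
        calc ‖c k‖ * |g k| ≤ ‖c k‖ * (2*h) :=
              mul_le_mul_of_nonneg_left (hbound k) (norm_nonneg _)
          _ = 2 * h * ‖c k‖ := by ring
      · have hg0 : g k = 0 := hfar k (not_lt.mp hnear)
        have hwk : w k = 0 := by simp [hw, hnear]
        rw [hg0, hwk]
        simp
  have htsumnorm : Summable (fun k => ‖(if k = j then 0 else c k * ((g k : ℝ):ℂ))‖) :=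
    Summable.of_nonneg_of_le (fun k => norm_nonneg _) htermle (hwsum.mul_left (2*h))
  have hWε : ∑' k, w k ≤ ε := by
    refine Summable.tsum_le_of_sum_le hwsum fun t => ?_
    have hdisj : Disjoint (t.filter fun k => k ≠ j ∧ |x k - x j| < h) F := by
      rw [Finset.disjoint_left]
      intro a ha haF
      obtain ⟨-, ha2⟩ := Finset.mem_filter.mp ha
      exact absurd ha2.2 (not_lt.mpr (hfarF a haF ha2.1).le)
    have hmem := hF _ hdisj
    rw [Set.mem_Iio] at hmem
    calc ∑ k ∈ t, w k
        = ∑ k ∈ t.filter (fun k => k ≠ j ∧ |x k - x j| < h), ‖c k‖ := by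
          rw [Finset.sum_filter]
      _ ≤ ε := hmem.le
  have hTbound : ‖∑' k, (if k = j then 0 else c k * ((g k : ℝ):ℂ))‖ ≤ 2*h*ε := by
    calc ‖∑' k, (if k = j then 0 else c k * ((g k : ℝ):ℂ))‖
        ≤ ∑' k, ‖(if k = j then 0 else c k * ((g k : ℝ):ℂ))‖ :=
          norm_tsum_le_tsum_norm htsumnorm
      _ ≤ ∑' k, 2*h*w k := Summable.tsum_le_tsum htermle htsumnorm (hwsum.mul_left _)
      _ = 2*h*∑' k, w k := tsum_mul_left
      _ ≤ 2*h*ε := mul_le_mul_of_nonneg_left hWε (by linarith)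
  have h1 : c j * ((g j : ℝ):ℂ) = -(∑' k, if k = j then 0 else c k * ((g k : ℝ):ℂ)) :=
    eq_neg_of_add_eq_zero_left hsplit.symm
  have h2 : ‖c j * ((g j : ℝ):ℂ)‖ = ‖c j‖ * h := by
    rw [norm_mul, hgj, Complex.norm_real, Real.norm_eq_abs, abs_neg, abs_of_pos hhpos]
  have habsj : ‖c j‖ * h ≤ 2*h*ε := by
    calc ‖c j‖ * h = ‖c j * ((g j : ℝ):ℂ)‖ := h2.symm
      _ = ‖-(∑' k, if k = j then 0 else c k * ((g k : ℝ):ℂ))‖ := by rw [h1]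
      _ = ‖∑' k, if k = j then 0 else c k * ((g k : ℝ):ℂ)‖ := by
          rw [norm_neg]
      _ ≤ 2*h*ε := by exact hTbound
  nlinarith [hhpos, hε, mul_pos hhpos hε]
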